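/- Let w : ℝ → ℝ be defined by w(0) = 1 and w(t) = (√(1+48t) − 1)/(24t) for t ≠ 0, and define F(t) = w(t) · ( (2/3)·(2−w(t))^{−2} − (4/3)·(2−w(t))^{−3} + (2/3)·(2−w(t))^{−4} ). Then for every natural number j ≥ 1, (−1)^j times the j-th iterated derivative of F at 0 equals 12^j · j · ( 4^j · j!/12 − (2j)!/(6·j!) ). -/

import Mathlib

open Nat

noncomputable def mapA (t : ℝ) : ℝ := Real.sqrt (1 + 48*t)
noncomputable def mapB (t : ℝ) : ℝ := (1 + 48*t)⁻¹
noncomputable def mapG (t : ℝ) : ℝ := 4*t*(mapA t - 1) * mapB t^2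
noncomputable def ca (n : ℕ) : ℝ := (-48 : ℝ)^n * n ! * n / 12
noncomputable def cb (n : ℕ) : ℝ := 192 * (-48 : ℝ)^(n-1) * (n+1)!
noncomputable def cc (n : ℕ) : ℝ := -(-24 : ℝ)^n * (2*n)! / (2^n * n !) * n / 6
noncomputable def cd (n : ℕ) : ℝ := -96 * (-24 : ℝ)^(n-1) * (2*n+1)! / (2^n * n !)

lemma hA_deriv (t : ℝ) (ht : 0 < 1 + 48*t) :
    HasDerivAt mapA (24 * mapA t * mapB t) t := by
  have h1 : HasDerivAt (fun u : ℝ => 1 + 48*u) 48 t := by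
    simpa using ((hasDerivAt_id t).const_mul 48).const_add 1
  have h2 := (Real.hasDerivAt_sqrt (ne_of_gt ht)).comp t h1
  have hA0 : Real.sqrt (1 + 48*t) > 0 := Real.sqrt_pos.2 ht
  have hs : Real.sqrt (1 + 48*t) * Real.sqrt (1 + 48*t) = 1 + 48*t :=
    Real.mul_self_sqrt ht.le
  refine h2.congr_deriv ?_
  unfold mapA mapB
  field_simp
  nlinarith [hs]

lemma hB_deriv (t : ℝ) (ht : 0 < 1 + 48*t) :
    HasDerivAt mapB (-48 * mapB t^2) t := by
  have h1 : HasDerivAt (fun u : ℝ => 1 + 48*u) 48 t := by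
    simpa using ((hasDerivAt_id t).const_mul 48).const_add 1
  have h2 := h1.inv (ne_of_gt ht)
  refine h2.congr_deriv ?_
  unfold mapB
  field_simp

lemma hderiv (p q r s : ℝ) (m : ℕ) (t : ℝ) (ht : 0 < 1 + 48*t) :
    HasDerivAt (fun u => p * mapB u^(m+1) + q * u * mapB u^(m+2)
        + r * mapA u * mapB u^(m+1) + s * u * mapA u * mapB u^(m+2))
      ((-48*(m+1)*p + q) * mapB t^(m+2) + (-48*(m+2)*q) * t * mapB t^(m+3)
        + ((24-48*(m+1))*r + s) * mapA t * mapB t^(m+2)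
        + ((24-48*(m+2))*s) * t * mapA t * mapB t^(m+3)) t := by
  have hA := hA_deriv t ht
  have hB := hB_deriv t ht
  have h1 := (hB.pow (m+1)).const_mul p
  have h2 := (((hasDerivAt_id t).mul (hB.pow (m+2))).const_mul q)
  have h3 := (((hA.mul (hB.pow (m+1)))).const_mul r)
  have h4 := ((((hasDerivAt_id t).mul (hA.mul (hB.pow (m+2))))).const_mul s)
  simp only [Pi.mul_apply, Pi.pow_apply] at h1 h2 h3 h4
  rw [show (fun y => q * (id y * mapB y^(m+2))) = fun y => q * y * mapB y^(m+2) from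
    funext fun y => by simp [mul_assoc]] at h2
  rw [show (fun y => r * (mapA y * mapB y^(m+1))) = fun y => r * mapA y * mapB y^(m+1) from
    funext fun y => by simp [mul_assoc]] at h3
  rw [show (fun y => s * (id y * (mapA y * mapB y^(m+2)))) =
      fun y => s * y * mapA y * mapB y^(m+2) from
    funext fun y => by simp [mul_assoc]] at h4
  have H := ((h1.add h2).add h3).add h4
  refine H.congr_deriv ?_
  simp only [Nat.add_sub_cancel, id_eq]
  push_cast
  ring

lemma ca_rec (k : ℕ) : ca (k+2) = -48*((k+1)+1)*ca (k+1) + cb (k+1) := by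
  simp only [ca, cb, Nat.add_sub_cancel, factorial_succ]
  push_cast
  ring

lemma cb_rec (k : ℕ) : cb (k+2) = -48*((k+1)+2)*cb (k+1) := by
  simp only [cb, Nat.add_sub_cancel, factorial_succ]
  push_cast
  ring

lemma cc_rec (k : ℕ) : cc (k+2) = (24-48*((k+1)+1))*cc (k+1) + cd (k+1) := by
  have h1 : (2*(k+2)) = (2*(k+1)+1)+1 := by ring
  simp only [cc, cd, Nat.add_sub_cancel, h1, factorial_succ]
  have hf : ((k+1)! : ℝ) ≠ 0 := by positivity
  have hf2 : ((2*(k+1))! : ℝ) ≠ 0 := by positivity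
  have hp : ((2:ℝ)^(k+1)) ≠ 0 := by positivity
  push_cast
  field_simp
  ring

lemma cd_rec (k : ℕ) : cd (k+2) = (24-48*((k+1)+2))*cd (k+1) := by
  have h1 : (2*(k+2)+1) = (2*(k+1)+1+1)+1 := by ring
  simp only [cd, Nat.add_sub_cancel, h1, factorial_succ, show k+2-1 = k+1 from rfl]
  have hf : ((k+1)! : ℝ) ≠ 0 := by positivity
  have hp : ((2:ℝ)^(k+1)) ≠ 0 := by positivity
  push_cast
  field_simp
  ring

lemma isOpen_U : IsOpen {t : ℝ | 0 < 1 + 48*t} :=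
  isOpen_lt continuous_const (by continuity)

lemma mapG_iter : ∀ n : ℕ, 1 ≤ n → ∀ t : ℝ, 0 < 1 + 48*t →
    iteratedDeriv n mapG t = ca n * mapB t^(n+1) + cb n * t * mapB t^(n+2)
      + cc n * mapA t * mapB t^(n+1) + cd n * t * mapA t * mapB t^(n+2) := by
  intro n
  induction n with
  | zero => omega
  | succ k ih =>
    intro _ t ht
    rcases Nat.eq_zero_or_pos k with hk | hk
    · subst hk
      rw [iteratedDeriv_one]
      have hA := hA_deriv t ht
      have hB := hB_deriv t ht
      have hG : HasDerivAt mapG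
          ((4*(mapA t - 1) + 4*t*(24 * mapA t * mapB t)) * mapB t^2
            + 4*t*(mapA t - 1) * (2 * mapB t^(2-1) * (-48 * mapB t^2))) t := by
        exact ((((hasDerivAt_id t).const_mul 4).mul (hA.sub_const 1)).mul (hB.pow 2)).congr_deriv
          (by simp [mul_comm, mul_assoc, mul_left_comm])
      rw [hG.deriv]
      have e1 : ca 1 = -4 := by norm_num [ca]
      have e2 : cb 1 = 384 := by norm_num [cb]
      have e3 : cc 1 = 4 := by norm_num [cc]
      have e4 : cd 1 = -288 := by norm_num [cd, Nat.factorial]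
      rw [e1, e2, e3, e4]
      norm_num
      ring
    · have hev : iteratedDeriv k mapG =ᶠ[nhds t] (fun u =>
          ca k * mapB u^(k+1) + cb k * u * mapB u^(k+2)
            + cc k * mapA u * mapB u^(k+1) + cd k * u * mapA u * mapB u^(k+2)) := by
        filter_upwards [isOpen_U.mem_nhds ht] with u hu using ih hk u hu
      rw [iteratedDeriv_succ, hev.deriv_eq,
        (hderiv (ca k) (cb k) (cc k) (cd k) k t ht).deriv]
      obtain ⟨j, rfl⟩ : ∃ j, k = j + 1 := ⟨k - 1, by omega⟩
      rw [show j+1+1 = j+2 from rfl, ca_rec j, cb_rec j, cc_rec j, cd_rec j]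
      push_cast
      ring

lemma key_alg (t : ℝ) (ht : 0 < 1 + 48*t) (ht0 : t ≠ 0) :
    ((Real.sqrt (1 + 48*t) - 1)/(24*t)) *
      ((2/3) * (2 - (Real.sqrt (1 + 48*t) - 1)/(24*t)) ^ (-2:ℤ)
        - (4/3) * (2 - (Real.sqrt (1 + 48*t) - 1)/(24*t)) ^ (-3:ℤ)
        + (2/3) * (2 - (Real.sqrt (1 + 48*t) - 1)/(24*t)) ^ (-4:ℤ)) = mapG t := by
  set s := Real.sqrt (1 + 48*t) with hsdef
  have hs : s * s = 1 + 48*t := Real.mul_self_sqrt ht.le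
  have hspos : 0 < s := Real.sqrt_pos.2 ht
  have hs1 : s + 1 ≠ 0 := by positivity
  have hwval : (s - 1)/(24*t) = 2/(s+1) := by
    rw [div_eq_div_iff (mul_ne_zero (by norm_num) ht0) hs1]
    nlinarith [hs]
  have h2w : 2 - (s - 1)/(24*t) = 2*s/(s+1) := by
    rw [hwval]; field_simp; ring
  have h2wne : 2*s/(s+1) ≠ 0 := by positivity
  rw [h2w, hwval]
  have z2 : (2*s/(s+1)) ^ (-2:ℤ) = ((2*s/(s+1))^(2:ℕ))⁻¹ := by
    rw [zpow_neg]; norm_cast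
  have z3 : (2*s/(s+1)) ^ (-3:ℤ) = ((2*s/(s+1))^(3:ℕ))⁻¹ := by
    rw [zpow_neg]; norm_cast
  have z4 : (2*s/(s+1)) ^ (-4:ℤ) = ((2*s/(s+1))^(4:ℕ))⁻¹ := by
    rw [zpow_neg]; norm_cast
  rw [z2, z3, z4]
  unfold mapG mapA mapB
  rw [← hsdef, ← hs]
  have hT : t = (s*s - 1)/48 := by linarith
  rw [hT]
  have hsne : s ≠ 0 := ne_of_gt hspos
  field_simp
  ring

lemma final_alg (j : ℕ) : (-1:ℝ)^j * (ca j + cc j) =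
    12 ^ j * (j : ℝ) * (4 ^ j * (j ! : ℝ) / 12 - ((2 * j)! : ℝ) / (6 * (j ! : ℝ))) := by
  have e1 : ((-1:ℝ))^j * (-48)^j = 12^j * 4^j := by rw [← mul_pow, ← mul_pow]; norm_num
  have e2 : ((-1:ℝ))^j * (-24)^j = 12^j * 2^j := by rw [← mul_pow, ← mul_pow]; norm_num
  have step : (-1:ℝ)^j * (ca j + cc j) =
      ((-1:ℝ)^j * (-48)^j) * j ! * j / 12
        - ((-1:ℝ)^j * (-24)^j) * ((2*j)! / (2^j * j !)) * j / 6 := by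
    unfold ca cc; ring
  rw [step, e1, e2]
  have hf : ((j ! : ℝ)) ≠ 0 := by positivity
  have hp : ((2:ℝ)^j) ≠ 0 := by positivity
  field_simp

/-- Count of 2-legged 4-valent genus-1 maps (g = 1 row of Table 1): with `w` the branch
of the 4-valent string equation `1 = w + 12 t w²` with `w(0) = 1`, and
`F(t) = z₁(w(t))`, we have
`(-1)^j F^{(j)}(0) = 12^j j (4^j j!/12 - (2j)!/(6 j!))` for `j ≥ 1`. -/
theorem two_legged_genus_one_counts
    (w : ℝ → ℝ) (hw0 : w 0 = 1)
    (hw : ∀ t : ℝ, t ≠ 0 → w t = (Real.sqrt (1 + 48 * t) - 1) / (24 * t))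
    (F : ℝ → ℝ)
    (hF : F = fun t => w t *
      ((2 / 3) * (2 - w t) ^ (-2 : ℤ) - (4 / 3) * (2 - w t) ^ (-3 : ℤ)
        + (2 / 3) * (2 - w t) ^ (-4 : ℤ))) :
    ∀ j : ℕ, 1 ≤ j → (-1) ^ j * iteratedDeriv j F 0 =
      12 ^ j * (j : ℝ) * (4 ^ j * (j ! : ℝ) / 12 - ((2 * j)! : ℝ) / (6 * (j ! : ℝ))) := by
  intro j hj
  have hFG : F =ᶠ[nhds 0] mapG := by
    filter_upwards [Ioo_mem_nhds (by norm_num : -(1/96 : ℝ) < 0) (by norm_num : (0:ℝ) < 1/96)]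
      with t htI
    rcases eq_or_ne t 0 with rfl | ht0
    · rw [hF]
      norm_num [hw0, mapG]
    · have ht : 0 < 1 + 48*t := by
        have := htI.1; linarith
      rw [hF]
      simp only
      rw [hw t ht0]
      exact key_alg t ht ht0
  rw [hFG.iteratedDeriv_eq j, mapG_iter j hj 0 (by norm_num)]
  have hA0 : mapA 0 = 1 := by rw [mapA]; norm_num
  have hB0 : mapB 0 = 1 := by rw [mapB]; norm_num
  rw [hA0, hB0]
  have hcl : ca j * (1:ℝ)^(j+1) + cb j * 0 * 1^(j+2) + cc j * 1 * 1^(j+1)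
      + cd j * 0 * 1 * 1^(j+2) = ca j + cc j := by ring
  rw [hcl]
  exact final_alg j
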